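/- For every n ≥ 2, the number of connected permutations of [n] avoiding all eight patterns in T₁ ∪ T₂ = {3214, 3241, 4213, 4231, 3124, 3142, 4123, 4132} is 2^{n-1} - 1. -/

import Mathlib

def Contains {n k : ℕ} (σ : Equiv.Perm (Fin n)) (τ : Fin k → ℕ) : Prop :=
  ∃ f : Fin k → Fin n, StrictMono f ∧ ∀ a b : Fin k, τ a < τ b ↔ σ (f a) < σ (f b)

def AvoidsT1T2 {n : ℕ} (σ : Equiv.Perm (Fin n)) : Prop :=
  ¬ Contains σ ![2,1,0,3] ∧ ¬ Contains σ ![2,1,3,0] ∧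
  ¬ Contains σ ![3,1,0,2] ∧ ¬ Contains σ ![3,1,2,0] ∧
  ¬ Contains σ ![2,0,1,3] ∧ ¬ Contains σ ![2,0,3,1] ∧
  ¬ Contains σ ![3,0,1,2] ∧ ¬ Contains σ ![3,0,2,1]

def Connected {n : ℕ} (σ : Equiv.Perm (Fin n)) : Prop :=
  ¬ ∃ l : ℕ, 0 < l ∧ l < n ∧ ∀ i : Fin n, (i : ℕ) < l → ((σ i : ℕ) < l)

def Hprop {n : ℕ} (σ : Equiv.Perm (Fin n)) : Prop :=
  ∀ i j k l : Fin n, i < j → j < k → k < l → σ j < σ i →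
    (σ i < σ k ∧ σ i < σ l) ∨ (σ k < σ j ∧ σ l < σ j)

lemma sm4 {α : Type*} [Preorder α] {i j k l : α} (h1 : i < j) (h2 : j < k) (h3 : k < l) :
    StrictMono ![i, j, k, l] := by
  intro a b hab
  fin_cases a <;> fin_cases b <;>
    simp_all [Matrix.cons_val_zero, Matrix.cons_val_one] <;>
    first
      | exact h1 | exact h2 | exact h3
      | exact h1.trans h2 | exact h2.trans h3 | exact (h1.trans h2).trans h3

lemma not_contains_of_H {n : ℕ} {σ : Equiv.Perm (Fin n)} (h : Hprop σ) (τ : Fin 4 → ℕ)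
    (h01 : τ 1 < τ 0) (hhi : ¬(τ 0 < τ 2 ∧ τ 0 < τ 3)) (hlo : ¬(τ 2 < τ 1 ∧ τ 3 < τ 1)) :
    ¬ Contains σ τ := by
  rintro ⟨f, hf, hiff⟩
  rcases h (f 0) (f 1) (f 2) (f 3) (hf (by decide)) (hf (by decide)) (hf (by decide))
      ((hiff 1 0).mp h01) with ⟨a, b⟩ | ⟨a, b⟩
  · exact hhi ⟨(hiff 0 2).mpr a, (hiff 0 3).mpr b⟩
  · exact hlo ⟨(hiff 2 1).mpr a, (hiff 3 1).mpr b⟩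

lemma avoids_of_H {n : ℕ} {σ : Equiv.Perm (Fin n)} (h : Hprop σ) : AvoidsT1T2 σ := by
  refine ⟨?_, ?_, ?_, ?_, ?_, ?_, ?_, ?_⟩ <;>
    exact not_contains_of_H h _ (by decide) (by decide) (by decide)

lemma H_of_avoids {n : ℕ} {σ : Equiv.Perm (Fin n)} (h : AvoidsT1T2 σ) : Hprop σ := by
  obtain ⟨h1, h2, h3, h4, h5, h6, h7, h8⟩ := h
  intro i j k l hij hjk hkl hji
  by_contra hc
  push_neg at hc
  obtain ⟨hc1, hc2⟩ := hc
  have hmono := sm4 hij hjk hkl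
  have hkj : ((σ k : ℕ)) ≠ (σ j : ℕ) :=
    fun e => absurd (σ.injective (Fin.val_injective e)) (Fin.ne_of_gt hjk)
  have hki : ((σ k : ℕ)) ≠ (σ i : ℕ) :=
    fun e => absurd (σ.injective (Fin.val_injective e)) (Fin.ne_of_gt (hij.trans hjk))
  have hlj : ((σ l : ℕ)) ≠ (σ j : ℕ) :=
    fun e => absurd (σ.injective (Fin.val_injective e)) (Fin.ne_of_gt (hjk.trans hkl))
  have hli : ((σ l : ℕ)) ≠ (σ i : ℕ) :=
    fun e => absurd (σ.injective (Fin.val_injective e)) (Fin.ne_of_gt ((hij.trans hjk).trans hkl))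
  have hlk : ((σ l : ℕ)) ≠ (σ k : ℕ) :=
    fun e => absurd (σ.injective (Fin.val_injective e)) (Fin.ne_of_gt hkl)
  -- classify σ k and σ l relative to σ j < σ i
  simp only [Fin.lt_def] at hji hc1 hc2
  rcases lt_trichotomy ((σ k : ℕ)) (σ j : ℕ) with hk | hk | hk
  · rcases lt_trichotomy ((σ l : ℕ)) (σ j : ℕ) with hl | hl | hl
    · omega
    · omega
    · rcases lt_trichotomy ((σ l : ℕ)) (σ i : ℕ) with hl2 | hl2 | hl2
      · -- k lo, l mid : pattern 4213 = ![3,1,0,2]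
        exact h3 ⟨![i,j,k,l], hmono, by
          intro a b; fin_cases a <;> fin_cases b <;> simp <;> omega⟩
      · omega
      · -- k lo, l hi : pattern 3214 = ![2,1,0,3]
        exact h1 ⟨![i,j,k,l], hmono, by
          intro a b; fin_cases a <;> fin_cases b <;> simp <;> omega⟩
  · omega
  · rcases lt_trichotomy ((σ k : ℕ)) (σ i : ℕ) with hk2 | hk2 | hk2
    · -- k mid
      rcases lt_trichotomy ((σ l : ℕ)) (σ j : ℕ) with hl | hl | hl
      · -- l lo : pattern 4231 = ![3,1,2,0]
        exact h4 ⟨![i,j,k,l], hmono, by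
          intro a b; fin_cases a <;> fin_cases b <;> simp <;> omega⟩
      · omega
      · rcases lt_trichotomy ((σ l : ℕ)) (σ i : ℕ) with hl2 | hl2 | hl2
        · rcases lt_trichotomy ((σ l : ℕ)) (σ k : ℕ) with hl3 | hl3 | hl3
          · -- k mid, l mid, l < k : pattern 4132 = ![3,0,2,1]
            exact h8 ⟨![i,j,k,l], hmono, by
              intro a b; fin_cases a <;> fin_cases b <;> simp <;> omega⟩
          · omega
          · -- k mid, l mid, k < l : pattern 4123 = ![3,0,1,2]
            exact h7 ⟨![i,j,k,l], hmono, by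
              intro a b; fin_cases a <;> fin_cases b <;> simp <;> omega⟩
        · omega
        · -- k mid, l hi : pattern 3124 = ![2,0,1,3]
          exact h5 ⟨![i,j,k,l], hmono, by
            intro a b; fin_cases a <;> fin_cases b <;> simp <;> omega⟩
    · omega
    · -- k hi
      rcases lt_trichotomy ((σ l : ℕ)) (σ j : ℕ) with hl | hl | hl
      · -- l lo : pattern 3241 = ![2,1,3,0]
        exact h2 ⟨![i,j,k,l], hmono, by
          intro a b; fin_cases a <;> fin_cases b <;> simp <;> omega⟩
      · omega
      · rcases lt_trichotomy ((σ l : ℕ)) (σ i : ℕ) with hl2 | hl2 | hl2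
        · -- k hi, l mid : pattern 3142 = ![2,0,3,1]
          exact h6 ⟨![i,j,k,l], hmono, by
            intro a b; fin_cases a <;> fin_cases b <;> simp <;> omega⟩
        · omega
        · omega


namespace CAT

variable {m : ℕ}

def pen : Fin (m + 2) := ⟨m, by omega⟩
def lst : Fin (m + 2) := ⟨m + 1, by omega⟩

@[simp] lemma lst_val : ((lst : Fin (m + 2)) : ℕ) = m + 1 := rfl
@[simp] lemma pen_val : ((pen : Fin (m + 2)) : ℕ) = m := rfl

def UM0 (τ : Equiv.Perm (Fin (m + 2))) : Prop :=
  τ 0 ≠ 0 ∧ τ lst = 0 ∧ ∃ p : Fin (m + 2),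
    StrictMonoOn τ (Set.Iic p) ∧ StrictAntiOn τ (Set.Ici p)

def Good (σ : Equiv.Perm (Fin (m + 2))) : Prop :=
  UM0 σ ∨ (UM0 (σ * Equiv.swap pen lst) ∧ σ lst ≠ lst)

lemma vne (σ : Equiv.Perm (Fin (m + 2))) {a b : Fin (m + 2)} (h : a ≠ b) :
    ((σ a : ℕ)) ≠ (σ b : ℕ) :=
  fun e => h (σ.injective (Fin.val_injective e))

lemma le_lst (x : Fin (m + 2)) : (x : ℕ) ≤ m + 1 := by omega

/-- in a UM0 permutation, the peak can be chosen to be the position of the max -/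
lemma um0_peak {τ : Equiv.Perm (Fin (m + 2))} (h : UM0 τ) :
    ∃ p : Fin (m + 2), τ p = lst ∧ StrictMonoOn τ (Set.Iic p) ∧ StrictAntiOn τ (Set.Ici p) := by
  obtain ⟨-, -, p, hmono, hanti⟩ := h
  refine ⟨p, ?_, hmono, hanti⟩
  set P := τ.symm lst with hP
  have hPv : τ P = lst := τ.apply_symm_apply lst
  rcases lt_trichotomy P p with hlt | heq | hgt
  · have := hmono (Set.mem_Iic.2 hlt.le) (Set.mem_Iic.2 le_rfl) hlt
    rw [hPv] at this
    exact absurd (Fin.lt_def.mp this) (by have := le_lst (τ p); simp only [lst_val]; omega)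
  · rw [← heq, hPv]
  · have := hanti (Set.mem_Ici.2 le_rfl) (Set.mem_Ici.2 hgt.le) hgt
    rw [hPv] at this
    exact absurd (Fin.lt_def.mp this) (by have := le_lst (τ p); simp only [lst_val]; omega)

lemma conn0 {σ : Equiv.Perm (Fin (m + 2))} (hC : Connected σ) : σ 0 ≠ 0 := by
  intro h
  exact hC ⟨1, one_pos, by omega, fun i hi => by
    have : i = 0 := by apply Fin.ext; simp only [Fin.val_zero]; omega
    rw [this, h]; simp⟩

/-- the key dichotomy from pattern avoidance -/
lemma star {σ : Equiv.Perm (Fin (m + 2))} (hH : Hprop σ) {i j : Fin (m + 2)}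
    (hij : i < j) (hjm : (j : ℕ) < m) (hinv : σ j < σ i) :
    (∀ k, j < k → σ i < σ k) ∨ (∀ k, j < k → σ k < σ j) := by
  obtain ⟨k1, hk1v⟩ : ∃ k1 : Fin (m + 2), (k1 : ℕ) = (j : ℕ) + 1 := ⟨⟨_, by omega⟩, rfl⟩
  obtain ⟨k2, hk2v⟩ : ∃ k2 : Fin (m + 2), (k2 : ℕ) = (j : ℕ) + 2 := ⟨⟨_, by omega⟩, rfl⟩
  have hjk1 : j < k1 := by rw [Fin.lt_def]; omega
  have hk12 : k1 < k2 := by rw [Fin.lt_def]; omega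
  have noMid : ∀ k, j < k → σ k < σ j ∨ σ i < σ k := by
    intro k hk
    by_cases hkk1 : k = k1
    · subst hkk1
      rcases hH i j k k2 hij hk hk12 hinv with ⟨a, _⟩ | ⟨a, _⟩
      · exact Or.inr a
      · exact Or.inl a
    · have hkv : (k : ℕ) ≠ (j : ℕ) + 1 := fun e => hkk1 (Fin.ext (by omega))
      have hk1k : k1 < k := by
        rw [Fin.lt_def] at hk ⊢
        omega
      rcases hH i j k1 k hij hjk1 hk1k hinv with ⟨_, b⟩ | ⟨_, b⟩
      · exact Or.inr b
      · exact Or.inl b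
  by_cases hall : ∀ k, j < k → σ i < σ k
  · exact Or.inl hall
  · right
    push_neg at hall
    obtain ⟨k0, hk0, hk0le⟩ := hall
    have hk0j : σ k0 < σ j := (noMid k0 hk0).resolve_right (fun h => absurd h (show σ k0 ≤ σ i from hk0le).not_gt)
    intro k hk
    rcases noMid k hk with h | h
    · exact h
    · exfalso
      rw [Fin.lt_def] at h hk0j hinv
      rcases lt_trichotomy k k0 with hlt | heq | hgt
      · rcases hH i j k k0 hij hk hlt hinv with ⟨_, b⟩ | ⟨a, _⟩
        · rw [Fin.lt_def] at b; omega
        · rw [Fin.lt_def] at a; omega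
      · subst heq; omega
      · rcases hH i j k0 k hij hk0 hgt hinv with ⟨a, _⟩ | ⟨_, b⟩
        · rw [Fin.lt_def] at a; omega
        · rw [Fin.lt_def] at b; omega

/-- position of 0 is at least m -/
lemma pos_zero {σ : Equiv.Perm (Fin (m + 2))} (hH : Hprop σ) (hC : Connected σ) :
    m ≤ (σ.symm 0 : ℕ) := by
  set q := σ.symm 0 with hqd
  have hqv : σ q = 0 := σ.apply_symm_apply 0
  have hq0 : q ≠ 0 := fun h => conn0 hC (by rw [← h, hqv, h])
  by_contra hqm
  push_neg at hqm
  obtain ⟨i0, hi0mem, hi0max⟩ :=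
    Finset.exists_max_image (Finset.Iic q) (fun x => σ x) ⟨q, Finset.mem_Iic.2 le_rfl⟩
  have h00 : (0 : Fin (m+2)) ∈ Finset.Iic q := Finset.mem_Iic.2 (Fin.zero_le q)
  have hσ0 : (0:ℕ) < σ 0 := by
    have := conn0 hC
    have : (σ 0 : ℕ) ≠ 0 := fun e => this (Fin.val_injective e)
    omega
  have hi0pos : (0:ℕ) < σ i0 := lt_of_lt_of_le hσ0 (hi0max 0 h00)
  have hi0q : i0 ≠ q := fun e => by rw [e, hqv] at hi0pos; simp at hi0pos
  have hi0lt : i0 < q := lt_of_le_of_ne (Finset.mem_Iic.1 hi0mem) hi0q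
  have hinv : σ q < σ i0 := by rw [Fin.lt_def, hqv]; exact hi0pos
  rcases star hH hi0lt hqm hinv with hup | hdown
  · -- all values after q exceed σ i0 : disconnection at q+1
    refine hC ⟨(q : ℕ) + 1, by omega, by omega, ?_⟩
    -- first : every value ≤ σ i0 sits at position ≤ q
    have hsub : ∀ v : Fin (m + 2), v ≤ σ i0 → σ.symm v ≤ q := by
      intro v hv
      by_contra hgt
      push_neg at hgt
      have := hup _ hgt
      rw [σ.apply_symm_apply] at this
      exact absurd (hv.trans_lt this) (lt_irrefl _)
    have hcard : (σ i0 : ℕ) ≤ (q : ℕ) := by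
      have hc := Finset.card_le_card_of_injOn (fun v => σ.symm v)
        (fun a ha => Finset.mem_Iic.2 (hsub a (Finset.mem_Iic.1 ha)))
        (fun a _ b _ e => σ.symm.injective e)
      rw [Fin.card_Iic, Fin.card_Iic] at hc
      omega
    intro i hi
    have : σ i ≤ σ i0 := hi0max i (Finset.mem_Iic.2 (by rw [Fin.le_def]; omega))
    rw [Fin.le_def] at this
    omega
  · -- all values after q are below 0: absurd
    have hq1 : q < ⟨(q : ℕ) + 1, by omega⟩ := by rw [Fin.lt_def]; simp
    have := hdown _ hq1
    rw [hqv] at this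
    exact absurd this (by rw [Fin.lt_def]; simp)

/-- position of the max is at most m -/
lemma pos_max {σ : Equiv.Perm (Fin (m + 2))} (hC : Connected σ) :
    (σ.symm lst : ℕ) ≤ m := by
  by_contra h
  push_neg at h
  have hP : σ.symm lst = lst := Fin.ext (by have := le_lst (σ.symm lst); simp only [lst_val]; omega)
  refine hC ⟨m + 1, by omega, by omega, ?_⟩
  intro i hi
  have hne : σ i ≠ lst := by
    intro e
    have : i = σ.symm lst := by rw [← e, σ.symm_apply_apply]
    rw [hP] at this
    rw [this] at hi
    simp only [lst_val] at hi
    omega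
  have : (σ i : ℕ) ≠ m + 1 := fun e => hne (Fin.ext (by simp only [lst_val]; omega))
  have := le_lst (σ i)
  omega

/-- σ is strictly increasing up to the position of the max -/
lemma incA {σ : Equiv.Perm (Fin (m + 2))} (hH : Hprop σ) (hC : Connected σ) :
    StrictMonoOn σ (Set.Iic (σ.symm lst)) := by
  set P := σ.symm lst with hPd
  have hPv : σ P = lst := σ.apply_symm_apply lst
  have hPm : (P : ℕ) ≤ m := pos_max hC
  intro i hi j hj hij
  rw [Set.mem_Iic] at hi hj
  by_contra hc
  push_neg at hc
  have hne : ((σ j : ℕ)) ≠ (σ i : ℕ) := vne σ (Fin.ne_of_gt hij)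
  have hinv : σ j < σ i := by
    rw [Fin.le_def] at hc
    rw [Fin.lt_def]
    omega
  have hjP : j ≠ P := by
    intro e
    rw [e, hPv] at hinv
    have := le_lst (σ i)
    rw [Fin.lt_def] at hinv
    simp [lst] at hinv
    omega
  have hjm : (j : ℕ) < m := by
    have : j < P := lt_of_le_of_ne hj hjP
    rw [Fin.lt_def] at this
    omega
  have hq := pos_zero hH hC
  set q := σ.symm 0 with hqd
  have hqv : σ q = 0 := σ.apply_symm_apply 0
  rcases star hH hij hjm hinv with hup | hdown
  · have hjq : j < q := by rw [Fin.lt_def]; omega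
    have := hup q hjq
    rw [hqv] at this
    exact absurd this (by rw [Fin.lt_def]; simp)
  · have hjP2 : j < P := lt_of_le_of_ne hj hjP
    have h2 := hdown P hjP2
    rw [hPv, Fin.lt_def] at h2
    have h3 := le_lst (σ j)
    simp only [lst_val] at h2
    omega

lemma eq_pen_of {x : Fin (m + 2)} (h : (x : ℕ) = m) : x = pen :=
  Fin.ext (by simp only [pen_val]; omega)

lemma eq_lst_of {x : Fin (m + 2)} (h : (x : ℕ) = m + 1) : x = lst :=
  Fin.ext (by simp only [lst_val]; omega)

lemma good_of {σ : Equiv.Perm (Fin (m + 2))} (hH : Hprop σ) (hC : Connected σ) : Good σ := by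
  have hq := pos_zero hH hC
  have hqv : σ (σ.symm 0) = 0 := σ.apply_symm_apply 0
  have hPv : σ (σ.symm lst) = lst := σ.apply_symm_apply lst
  have hPm : (σ.symm lst : ℕ) ≤ m := pos_max hC
  set q := σ.symm 0 with hqdef
  set P := σ.symm lst with hPdef
  have hq' : (q : ℕ) ≤ m + 1 := le_lst q
  have hPq : P ≠ q := by
    intro e
    rw [e, hqv] at hPv
    have := congrArg Fin.val hPv
    simp only [lst_val, Fin.val_zero] at this
    omega
  rcases (by omega : (q : ℕ) = m + 1 ∨ (q : ℕ) = m) with hqval | hqval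
  · -- Form A
    left
    have hqlst : q = lst := eq_lst_of hqval
    refine ⟨conn0 hC, by rw [← hqlst]; exact hqv, P, incA hH hC, ?_⟩
    intro i hi j hj hij
    rw [Set.mem_Ici] at hi hj
    show σ j < σ i
    by_cases hiP : i = P
    · have hjP : j ≠ P := by
        intro e
        exact (Fin.ne_of_gt hij) (hiP.trans e.symm).symm
      have hne := vne σ hjP
      rw [hPv] at hne
      rw [hiP, hPv, Fin.lt_def]
      have h2 := le_lst (σ j)
      simp only [lst_val] at hne ⊢
      omega
    · have hPi : P < i := lt_of_le_of_ne hi (Ne.symm hiP)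
      have hinv : σ i < σ P := by
        have hne : ((σ i : ℕ)) ≠ (σ P : ℕ) := vne σ hiP
        have h2 := le_lst (σ i)
        rw [hPv] at hne
        rw [hPv, Fin.lt_def]
        simp only [lst_val] at hne ⊢
        omega
      by_cases him : (i : ℕ) < m
      · rcases star hH hPi him hinv with hup | hdown
        · exfalso
          have h3 := hup j hij
          rw [hPv, Fin.lt_def] at h3
          have h4 := le_lst (σ j)
          simp only [lst_val] at h3
          omega
        · exact hdown j hij
      · -- i sits at position m : j = lst
        have hival : (i : ℕ) = m := by
          rw [Fin.lt_def] at hij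
          have := le_lst j
          omega
        have hjlst : j = lst := by
          apply eq_lst_of
          rw [Fin.lt_def] at hij
          have := le_lst j
          omega
        have hiq : i ≠ q := by
          intro e
          rw [e, hqval] at hival
          omega
        have hne := vne σ hiq
        rw [hqv] at hne
        rw [hjlst, ← hqlst, hqv, Fin.lt_def]
        simp only [Fin.val_zero] at hne ⊢
        omega
  · -- Form B
    right
    have hqpen : q = pen := eq_pen_of hqval
    have hσpen : σ pen = 0 := by rw [← hqpen]; exact hqv
    have hm1 : 1 ≤ m := by
      have hq0 : q ≠ 0 := fun h => conn0 hC (by rw [← h, hqv, h])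
      have : (q : ℕ) ≠ 0 := fun e => hq0 (Fin.ext (by simp only [Fin.val_zero]; omega))
      omega
    have hPm' : (P : ℕ) < m := by
      have : (P : ℕ) ≠ (q : ℕ) := fun e => hPq (Fin.ext e)
      omega
    set τ : Equiv.Perm (Fin (m + 2)) := σ * Equiv.swap pen lst with hτdef
    have hτ : ∀ x : Fin (m + 2), (x : ℕ) < m → τ x = σ x := by
      intro x hx
      rw [hτdef, Equiv.Perm.mul_apply, Equiv.swap_apply_of_ne_of_ne]
      · intro e; rw [e, pen_val] at hx; omega
      · intro e; rw [e, lst_val] at hx; omega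
    have hτpen : τ pen = σ lst := by
      rw [hτdef, Equiv.Perm.mul_apply, Equiv.swap_apply_left]
    have hτlst : τ lst = σ pen := by
      rw [hτdef, Equiv.Perm.mul_apply, Equiv.swap_apply_right]
    constructor
    · refine ⟨?_, by rw [hτlst, hσpen], P, ?_, ?_⟩
      · rw [hτ 0 (by simp only [Fin.val_zero]; omega)]
        exact conn0 hC
      · -- mono
        intro x hx y hy hxy
        rw [Set.mem_Iic] at hx hy
        have hx' : (x : ℕ) < m := by rw [Fin.le_def] at hx; omega
        have hy' : (y : ℕ) < m := by rw [Fin.le_def] at hy; omega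
        rw [hτ x hx', hτ y hy']
        exact incA hH hC (Set.mem_Iic.2 hx) (Set.mem_Iic.2 hy) hxy
      · -- anti
        intro x hx y hy hxy
        rw [Set.mem_Ici] at hx hy
        show τ y < τ x
        by_cases hxP : x = P
        · have hyx : y ≠ x := Fin.ne_of_gt hxy
          have hne := vne τ hyx
          rw [hxP, hτ P hPm', hPv] at hne ⊢
          rw [Fin.lt_def]
          have h2 := le_lst (τ y)
          simp only [lst_val] at hne ⊢
          omega
        · have hPx : P < x := lt_of_le_of_ne hx (Ne.symm hxP)
          rcases lt_trichotomy ((x : ℕ)) m with hxm | hxm | hxm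
          · -- x in untouched region
            have hinvx : σ x < σ P := by
              have hne : ((σ x : ℕ)) ≠ (σ P : ℕ) := vne σ hxP
              have h2 := le_lst (σ x)
              rw [hPv] at hne
              rw [hPv, Fin.lt_def]
              simp only [lst_val] at hne ⊢
              omega
            rcases star hH hPx hxm hinvx with hup | hdown
            · exfalso
              have hxlst : x < lst := by rw [Fin.lt_def]; simp only [lst_val]; omega
              have h3 := hup lst hxlst
              rw [hPv, Fin.lt_def] at h3
              have h4 := le_lst (σ lst)
              simp only [lst_val] at h3
              omega
            · rcases lt_trichotomy ((y : ℕ)) m with hym | hym | hym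
              · rw [hτ x hxm, hτ y hym]
                exact hdown y hxy
              · have hypen : y = pen := eq_pen_of hym
                rw [hypen, hτpen, hτ x hxm]
                exact hdown lst (by rw [Fin.lt_def]; simp only [lst_val]; omega)
              · have hylst : y = lst := eq_lst_of (by have := le_lst y; omega)
                have hxpen : x ≠ pen := by
                  intro e; rw [e, pen_val] at hxm; omega
                have hne : ((σ x : ℕ)) ≠ ((σ pen : ℕ)) := vne σ hxpen
                rw [hσpen] at hne
                rw [hylst, hτlst, hσpen, hτ x hxm, Fin.lt_def]
                simp only [Fin.val_zero] at hne ⊢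
                omega
          · -- x = pen
            have hxpen : x = pen := eq_pen_of hxm
            have hylst : y = lst := by
              apply eq_lst_of
              rw [Fin.lt_def] at hxy
              rw [hxpen, pen_val] at hxy
              have := le_lst y
              omega
            have hlstpen : (lst : Fin (m+2)) ≠ pen := by
              intro e
              have := congrArg Fin.val e
              simp only [lst_val, pen_val] at this
              omega
            have hne : ((σ lst : ℕ)) ≠ ((σ pen : ℕ)) := vne σ hlstpen
            rw [hσpen] at hne
            rw [hxpen, hylst, hτpen, hτlst, hσpen, Fin.lt_def]
            simp only [Fin.val_zero] at hne ⊢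
            omega
          · -- x = lst : no y above
            exfalso
            rw [Fin.lt_def] at hxy
            have := le_lst y
            omega
    · -- σ lst ≠ lst
      intro e
      have h2 : σ.symm lst = lst := by
        apply σ.injective
        rw [σ.apply_symm_apply, e]
      rw [← hPdef] at h2
      rw [h2, lst_val] at hPm'
      omega

lemma conn_of_good {σ : Equiv.Perm (Fin (m + 2))} (hG : Good σ) : Connected σ := by
  rintro ⟨l, hl0, hln, hall⟩
  obtain ⟨L, hLv⟩ : ∃ L : Fin (m + 2), (L : ℕ) = l := ⟨⟨l, by omega⟩, rfl⟩
  have himg : Finset.image σ (Finset.Iio L) = Finset.Iio L := by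
    apply Finset.eq_of_subset_of_card_le
    · intro v hv
      simp only [Finset.mem_image] at hv
      obtain ⟨x, hx, rfl⟩ := hv
      rw [Finset.mem_Iio] at hx ⊢
      rw [Fin.lt_def] at hx ⊢
      have := hall x (by omega)
      omega
    · rw [Finset.card_image_of_injective _ σ.injective]
  have h0 : (0 : Fin (m + 2)) ∈ Finset.Iio L :=
    Finset.mem_Iio.2 (by rw [Fin.lt_def]; simp only [Fin.val_zero]; omega)
  rw [← himg] at h0
  obtain ⟨x, hx, hx0⟩ := Finset.mem_image.1 h0
  rw [Finset.mem_Iio, Fin.lt_def] at hx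
  rcases hG with ⟨_, h0lst, _⟩ | ⟨⟨_, hτlst, _⟩, hne⟩
  · -- σ lst = 0 : x = lst, but lst can't be in a proper prefix
    have hxl : x = lst := σ.injective (hx0.trans h0lst.symm)
    rw [hxl, lst_val] at hx
    omega
  · -- σ pen = 0
    have hσpen : σ pen = 0 := by
      rw [Equiv.Perm.mul_apply, Equiv.swap_apply_right] at hτlst
      exact hτlst
    have hxpen : x = pen := σ.injective (hx0.trans hσpen.symm)
    rw [hxpen, pen_val] at hx
    have hlm : l = m + 1 := by omega
    apply hne
    have hnotmem : σ lst ∉ Finset.Iio L := by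
      intro hmem
      rw [← himg] at hmem
      obtain ⟨y, hy, hy0⟩ := Finset.mem_image.1 hmem
      have : y = lst := σ.injective hy0
      rw [this, Finset.mem_Iio, Fin.lt_def, lst_val] at hy
      omega
    rw [Finset.mem_Iio, Fin.lt_def] at hnotmem
    push_neg at hnotmem
    apply eq_lst_of
    have := le_lst (σ lst)
    omega

lemma hprop_of_good {σ : Equiv.Perm (Fin (m + 2))} (hG : Good σ) : Hprop σ := by
  rcases hG with hA | ⟨hB, hBne⟩
  · obtain ⟨p, hpv, hmono, hanti⟩ := um0_peak hA
    intro i j k l hij hjk hkl hinv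
    have hpj : p < j := by
      by_contra hc
      push_neg at hc
      have := hmono (Set.mem_Iic.2 (hij.le.trans hc)) (Set.mem_Iic.2 hc) hij
      rw [Fin.lt_def] at this hinv
      omega
    right
    exact ⟨hanti (Set.mem_Ici.2 hpj.le) (Set.mem_Ici.2 (hpj.trans hjk).le) hjk,
      hanti (Set.mem_Ici.2 hpj.le) (Set.mem_Ici.2 ((hpj.trans hjk).trans hkl).le)
        (hjk.trans hkl)⟩
  · set τ : Equiv.Perm (Fin (m + 2)) := σ * Equiv.swap pen lst with hτdef
    have hτlst0 : τ lst = 0 := hB.2.1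
    obtain ⟨p, hpv, hmono, hanti⟩ := um0_peak hB
    have hτpen : τ pen = σ lst := by
      rw [hτdef, Equiv.Perm.mul_apply, Equiv.swap_apply_left]
    have hτlst : τ lst = σ pen := by
      rw [hτdef, Equiv.Perm.mul_apply, Equiv.swap_apply_right]
    have hτ : ∀ x : Fin (m + 2), (x : ℕ) < m → τ x = σ x := by
      intro x hx
      rw [hτdef, Equiv.Perm.mul_apply, Equiv.swap_apply_of_ne_of_ne]
      · intro e; rw [e, pen_val] at hx; omega
      · intro e; rw [e, lst_val] at hx; omega
    have hplst : p ≠ lst := by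
      intro e
      rw [e, hτlst0] at hpv
      have := congrArg Fin.val hpv
      simp only [lst_val, Fin.val_zero] at this
      omega
    have hppen : p ≠ pen := by
      intro e
      rw [e, hτpen] at hpv
      apply hBne
      exact hpv
    have hpm : (p : ℕ) < m := by
      have h1 : (p : ℕ) ≠ m := fun e => hppen (eq_pen_of e)
      have h2 : (p : ℕ) ≠ m + 1 := fun e => hplst (eq_lst_of e)
      have := le_lst p
      omega
    intro i j k l hij hjk hkl hinv
    -- j and i live in the untouched region
    have hjm : (j : ℕ) < m := by
      rw [Fin.lt_def] at hjk hkl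
      have := le_lst l
      omega
    have him : (i : ℕ) < m := by rw [Fin.lt_def] at hij; omega
    have hinvτ : τ j < τ i := by rw [hτ i him, hτ j hjm]; exact hinv
    have hpj : p < j := by
      by_contra hc
      push_neg at hc
      have := hmono (Set.mem_Iic.2 (hij.le.trans hc)) (Set.mem_Iic.2 hc) hij
      rw [Fin.lt_def] at this hinvτ
      omega
    have hσpen : σ pen = 0 := by rw [← hτlst]; exact hτlst0
    have hjσ : (0:ℕ) < (σ j : ℕ) := by
      have hjpen : j ≠ pen := by intro e; rw [e, pen_val] at hjm; omega
      have := vne σ hjpen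
      rw [hσpen] at this
      simp only [Fin.val_zero] at this
      omega
    right
    constructor
    · -- σ k < σ j
      rcases lt_trichotomy ((k : ℕ)) m with hkm | hkm | hkm
      · have := hanti (Set.mem_Ici.2 hpj.le) (Set.mem_Ici.2 (hpj.trans hjk).le) hjk
        rw [hτ j hjm, hτ k hkm] at this
        exact this
      · rw [eq_pen_of hkm, hσpen, Fin.lt_def]
        simp only [Fin.val_zero]
        omega
      · exfalso
        rw [Fin.lt_def] at hkl
        have := le_lst l
        omega
    · -- σ l < σ j
      rcases lt_trichotomy ((l : ℕ)) m with hlm | hlm | hlm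
      · have := hanti (Set.mem_Ici.2 hpj.le) (Set.mem_Ici.2 ((hpj.trans hjk).trans hkl).le)
          (hjk.trans hkl)
        rw [hτ j hjm, hτ l hlm] at this
        exact this
      · rw [eq_pen_of hlm, hσpen, Fin.lt_def]
        simp only [Fin.val_zero]
        omega
      · have hllst : l = lst := eq_lst_of (by have := le_lst l; omega)
        have hjpen2 : j < pen := by rw [Fin.lt_def]; simp only [pen_val]; omega
        have := hanti (Set.mem_Ici.2 hpj.le) (Set.mem_Ici.2 (hpj.trans hjpen2).le) hjpen2
        rw [hτ j hjm, hτpen] at this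
        rw [hllst]
        exact this


lemma um0_peak' {τ : Equiv.Perm (Fin (m + 2))} (h : UM0 τ) :
    StrictMonoOn τ (Set.Iic (τ.symm lst)) ∧ StrictAntiOn τ (Set.Ici (τ.symm lst)) := by
  obtain ⟨p, hpv, h1, h2⟩ := um0_peak h
  have : τ.symm lst = p := by rw [← hpv, τ.symm_apply_apply]
  rw [this]
  exact ⟨h1, h2⟩

def vv (v : Fin m) : Fin (m + 2) := ⟨(v : ℕ) + 1, by omega⟩

@[simp] lemma vv_val (v : Fin m) : ((vv v : Fin (m + 2)) : ℕ) = (v : ℕ) + 1 := rfl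

noncomputable def Phi (τ : Equiv.Perm (Fin (m + 2))) : Fin m → Bool :=
  fun v => decide (τ.symm (vv v) < τ.symm lst)

lemma peak_ne_lst {τ : Equiv.Perm (Fin (m + 2))} (h : UM0 τ) : τ.symm lst ≠ lst := by
  intro e
  have h2 : τ lst = lst := by
    conv_lhs => rw [← e]
    rw [τ.apply_symm_apply]
  rw [h.2.1] at h2
  have := congrArg Fin.val h2
  simp only [Fin.val_zero, lst_val] at this
  omega

lemma key_iff {τ : Equiv.Perm (Fin (m + 2))} (h : UM0 τ) (w : Fin (m + 2)) :
    τ.symm w ≤ τ.symm lst ↔ (w = lst ∨ ∃ v, w = vv v ∧ Phi τ v = true) := by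
  have hplst := peak_ne_lst h
  rcases (by omega : (w : ℕ) = 0 ∨ (w : ℕ) = m + 1 ∨ (0 < (w : ℕ) ∧ (w : ℕ) < m + 1)) with
    hw | hw | ⟨hw1, hw2⟩
  · -- w = 0
    have hw0 : w = 0 := Fin.ext (by simp only [Fin.val_zero]; omega)
    have hs0 : τ.symm w = lst := by rw [hw0, ← h.2.1, τ.symm_apply_apply]
    constructor
    · intro hle
      exfalso
      rw [hs0] at hle
      exact hplst (le_antisymm (by rw [Fin.le_def]; exact le_lst _) hle)
    · rintro (hl | ⟨v, hv, -⟩)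
      · rw [hl] at hw; simp only [lst_val] at hw; omega
      · rw [hv] at hw; simp only [vv_val] at hw; omega
  · -- w = lst
    have hwl : w = lst := Fin.ext (by simp only [lst_val]; omega)
    simp [hwl]
  · -- w = vv v
    have hm0 : 0 < m := by omega
    set v : Fin m := ⟨(w : ℕ) - 1, by omega⟩ with hvdef
    have hwv : w = vv v := Fin.ext (by simp only [vv_val, hvdef, Fin.val_mk]; omega)
    have hne : τ.symm w ≠ τ.symm lst := by
      intro e
      have : w = lst := by rw [← τ.apply_symm_apply w, e, τ.apply_symm_apply]
      rw [this] at hw2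
      simp only [lst_val] at hw2
      omega
    constructor
    · intro hle
      right
      exact ⟨v, hwv, by rw [Phi, ← hwv]; exact decide_eq_true (lt_of_le_of_ne hle hne)⟩
    · rintro (hl | ⟨v', hv', hphi⟩)
      · rw [hl] at hw2; simp only [lst_val] at hw2; omega
      · rw [Phi] at hphi
        have := of_decide_eq_true hphi
        rw [← hv'] at this
        exact this.le

lemma peak_card {τ : Equiv.Perm (Fin (m + 2))} :
    (Finset.univ.filter (fun w => τ.symm w ≤ τ.symm lst)).card = (τ.symm lst : ℕ) + 1 := by
  classical
  have himg : Finset.univ.filter (fun w => τ.symm w ≤ τ.symm lst) =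
      Finset.image τ (Finset.Iic (τ.symm lst)) := by
    ext w
    simp only [Finset.mem_filter, Finset.mem_univ, true_and, Finset.mem_image, Finset.mem_Iic]
    constructor
    · intro hw
      exact ⟨τ.symm w, hw, τ.apply_symm_apply w⟩
    · rintro ⟨x, hx, rfl⟩
      rw [τ.symm_apply_apply]
      exact hx
  rw [himg, Finset.card_image_of_injective _ τ.injective, Fin.card_Iic]

lemma range_inc (τ : Equiv.Perm (Fin (m + 2))) {k : ℕ} (hk : k ≤ m + 1) :
    Set.range (fun x : Fin (k + 1) => τ (⟨(x : ℕ), by omega⟩ : Fin (m + 2))) =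
      {w : Fin (m + 2) | (τ.symm w : ℕ) ≤ k} := by
  ext w
  simp only [Set.mem_range, Set.mem_setOf_eq]
  constructor
  · rintro ⟨x, rfl⟩
    rw [τ.symm_apply_apply]
    show (x : ℕ) ≤ k
    have := x.2
    omega
  · intro hw
    refine ⟨⟨(τ.symm w : ℕ), by omega⟩, ?_⟩
    have he : (⟨(τ.symm w : ℕ), by omega⟩ : Fin (m + 2)) = τ.symm w := Fin.ext rfl
    rw [he, τ.apply_symm_apply]

lemma range_dec (τ : Equiv.Perm (Fin (m + 2))) {k : ℕ} (hk : k ≤ m + 1) :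
    Set.range (fun x : Fin (m + 1 - k) => τ (⟨m + 1 - (x : ℕ), by omega⟩ : Fin (m + 2))) =
      {w : Fin (m + 2) | k < (τ.symm w : ℕ)} := by
  ext w
  simp only [Set.mem_range, Set.mem_setOf_eq]
  constructor
  · rintro ⟨x, rfl⟩
    rw [τ.symm_apply_apply]
    show k < m + 1 - (x : ℕ)
    have := x.2
    omega
  · intro hw
    have hle := le_lst (τ.symm w)
    refine ⟨⟨m + 1 - (τ.symm w : ℕ), by omega⟩, ?_⟩
    have he : (⟨m + 1 - (m + 1 - (τ.symm w : ℕ)), by omega⟩ : Fin (m + 2)) = τ.symm w :=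
      Fin.ext (by show m + 1 - (m + 1 - _) = _; omega)
    rw [he, τ.apply_symm_apply]

lemma um0_ext {τ τ' : Equiv.Perm (Fin (m + 2))} (h : UM0 τ) (h' : UM0 τ')
    (hΦ : Phi τ = Phi τ') : τ = τ' := by
  classical
  have hset : ∀ w, (τ.symm w ≤ τ.symm lst ↔ τ'.symm w ≤ τ'.symm lst) := by
    intro w
    rw [key_iff h, key_iff h', hΦ]
  have hpp : ((τ.symm lst : ℕ)) = (τ'.symm lst : ℕ) := by
    have heq : (Finset.univ.filter (fun w => τ.symm w ≤ τ.symm lst)) =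
        (Finset.univ.filter (fun w => τ'.symm w ≤ τ'.symm lst)) := by
      ext w
      simp only [Finset.mem_filter, Finset.mem_univ, true_and]
      exact hset w
    have h1 := peak_card (τ := τ)
    have h2 := peak_card (τ := τ')
    rw [heq] at h1
    omega
  have hk : (τ.symm lst : ℕ) ≤ m + 1 := le_lst _
  have hsetv : ∀ w : Fin (m + 2), ((τ.symm w : ℕ) ≤ (τ.symm lst : ℕ) ↔
      (τ'.symm w : ℕ) ≤ (τ.symm lst : ℕ)) := by
    intro w
    have := hset w
    rw [Fin.le_def, Fin.le_def] at this
    omega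
  obtain ⟨hmono, hanti⟩ := um0_peak' h
  obtain ⟨hmono', hanti'⟩ := um0_peak' h'
  have hf : (fun x : Fin ((τ.symm lst : ℕ) + 1) => τ (⟨(x : ℕ), by omega⟩ : Fin (m + 2))) =
      (fun x : Fin ((τ.symm lst : ℕ) + 1) => τ' (⟨(x : ℕ), by omega⟩ : Fin (m + 2))) := by
    refine (StrictMono.range_inj ?_ ?_).1 ?_
    · intro x y hxy
      have hx2 := x.2
      have hy2 := y.2
      exact hmono (Set.mem_Iic.2 (by rw [Fin.le_def]; show (x : ℕ) ≤ _; omega))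
        (Set.mem_Iic.2 (by rw [Fin.le_def]; show (y : ℕ) ≤ _; omega))
        (by rw [Fin.lt_def]; exact hxy)
    · intro x y hxy
      have hx2 := x.2
      have hy2 := y.2
      exact hmono' (Set.mem_Iic.2 (by rw [Fin.le_def]; show (x : ℕ) ≤ _; omega))
        (Set.mem_Iic.2 (by rw [Fin.le_def]; show (y : ℕ) ≤ _; omega))
        (by rw [Fin.lt_def]; exact hxy)
    · rw [range_inc τ hk, range_inc τ' hk]
      ext w
      simp only [Set.mem_setOf_eq]
      exact hsetv w
  have hg : (fun x : Fin (m + 1 - (τ.symm lst : ℕ)) =>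
        τ (⟨m + 1 - (x : ℕ), by omega⟩ : Fin (m + 2))) =
      (fun x : Fin (m + 1 - (τ.symm lst : ℕ)) =>
        τ' (⟨m + 1 - (x : ℕ), by omega⟩ : Fin (m + 2))) := by
    refine (StrictMono.range_inj ?_ ?_).1 ?_
    · intro x y hxy
      have hx2 : (x : ℕ) < m + 1 - (τ.symm lst : ℕ) := x.2
      have hy2 : (y : ℕ) < m + 1 - (τ.symm lst : ℕ) := y.2
      exact hanti (Set.mem_Ici.2 (by rw [Fin.le_def]; show _ ≤ m + 1 - (y : ℕ); omega))
        (Set.mem_Ici.2 (by rw [Fin.le_def]; show _ ≤ m + 1 - (x : ℕ); omega))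
        (by rw [Fin.lt_def]; show m + 1 - (y : ℕ) < m + 1 - (x : ℕ); omega)
    · intro x y hxy
      have hx2 : (x : ℕ) < m + 1 - (τ.symm lst : ℕ) := x.2
      have hy2 : (y : ℕ) < m + 1 - (τ.symm lst : ℕ) := y.2
      exact hanti' (Set.mem_Ici.2 (by rw [Fin.le_def]; show _ ≤ m + 1 - (y : ℕ); omega))
        (Set.mem_Ici.2 (by rw [Fin.le_def]; show _ ≤ m + 1 - (x : ℕ); omega))
        (by rw [Fin.lt_def]; show m + 1 - (y : ℕ) < m + 1 - (x : ℕ); omega)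
    · rw [range_dec τ hk, range_dec τ' hk]
      ext w
      simp only [Set.mem_setOf_eq]
      have h1 := hsetv w
      have h2 := le_lst (τ.symm w)
      have h3 := le_lst (τ'.symm w)
      omega
  ext y
  rcases le_or_gt ((y : ℕ)) ((τ.symm lst : ℕ)) with hy | hy
  · have hc := congrFun hf ⟨(y : ℕ), by omega⟩
    simp only at hc
    have hyy : (⟨((y : ℕ)), by omega⟩ : Fin (m + 2)) = y := Fin.ext rfl
    rw [hyy] at hc
    exact congrArg Fin.val hc
  · have hy2 := le_lst y
    have hc := congrFun hg ⟨m + 1 - (y : ℕ), by omega⟩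
    simp only at hc
    have hyy : (⟨m + 1 - (m + 1 - ((y : ℕ))), by omega⟩ : Fin (m + 2)) = y :=
      Fin.ext (by show m + 1 - (m + 1 - _) = _; omega)
    rw [hyy] at hc
    exact congrArg Fin.val hc

section Psi

variable (g : Fin m → Bool)

noncomputable def Aset : Finset (Fin (m + 2)) :=
  insert lst ((Finset.univ.filter (fun v => g v = true)).image vv)

lemma lst_mem_Aset : lst ∈ Aset g := Finset.mem_insert_self _ _

lemma zero_not_mem_Aset : (0 : Fin (m + 2)) ∉ Aset g := by
  intro h
  rcases Finset.mem_insert.1 h with h | h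
  · have := congrArg Fin.val h
    simp only [Fin.val_zero, lst_val] at this
    omega
  · obtain ⟨v, -, hv⟩ := Finset.mem_image.1 h
    have := congrArg Fin.val hv
    simp only [Fin.val_zero, vv_val] at this
    omega

lemma Aset_card_pos : 1 ≤ (Aset g).card :=
  Finset.card_pos.2 ⟨lst, lst_mem_Aset g⟩

lemma Aset_card_le : (Aset g).card ≤ m + 1 := by
  classical
  have hsub : Aset g ⊆ Finset.univ.erase 0 := by
    intro a ha
    rw [Finset.mem_erase]
    exact ⟨fun e => zero_not_mem_Aset g (e ▸ ha), Finset.mem_univ a⟩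
  have := Finset.card_le_card hsub
  rw [Finset.card_erase_of_mem (Finset.mem_univ _), Finset.card_univ, Fintype.card_fin] at this
  omega

lemma Aset_compl_card : ((Aset g)ᶜ : Finset (Fin (m + 2))).card = m + 2 - (Aset g).card := by
  rw [Finset.card_compl, Fintype.card_fin]

lemma mem_vv_Aset {v : Fin m} : vv v ∈ Aset g ↔ g v = true := by
  constructor
  · intro h
    rcases Finset.mem_insert.1 h with h | h
    · exfalso
      have := congrArg Fin.val h
      simp only [vv_val, lst_val] at this
      have := v.2
      omega
    · obtain ⟨v', hv', he⟩ := Finset.mem_image.1 h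
      have : v' = v := by
        have := congrArg Fin.val he
        simp only [vv_val] at this
        exact Fin.ext (by omega)
      rw [← this]
      exact (Finset.mem_filter.1 hv').2
  · intro h
    exact Finset.mem_insert.2 (Or.inr (Finset.mem_image.2
      ⟨v, Finset.mem_filter.2 ⟨Finset.mem_univ v, h⟩, rfl⟩))

noncomputable def Ffun : Fin (m + 2) → Fin (m + 2) := fun i =>
  if h : (i : ℕ) < (Aset g).card then
    ((Aset g).orderIsoOfFin rfl ⟨(i : ℕ), h⟩ : Fin (m + 2))
  else
    (((Aset g)ᶜ).orderIsoOfFin (Aset_compl_card g)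
      ⟨m + 1 - (i : ℕ), by
        have h1 := Aset_card_le g
        have h2 := i.2
        omega⟩ : Fin (m + 2))

lemma Ffun_lt {i : Fin (m + 2)} (h : (i : ℕ) < (Aset g).card) :
    Ffun g i = ((Aset g).orderIsoOfFin rfl ⟨(i : ℕ), h⟩ : Fin (m + 2)) := dif_pos h

lemma Ffun_ge {i : Fin (m + 2)} (h : ¬ (i : ℕ) < (Aset g).card) :
    Ffun g i = (((Aset g)ᶜ).orderIsoOfFin (Aset_compl_card g)
      ⟨m + 1 - (i : ℕ), by
        have h1 := Aset_card_le g
        have h2 := i.2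
        omega⟩ : Fin (m + 2)) := dif_neg h

lemma Ffun_mem {i : Fin (m + 2)} (h : (i : ℕ) < (Aset g).card) : Ffun g i ∈ Aset g := by
  rw [Ffun_lt g h]
  exact ((Aset g).orderIsoOfFin rfl _).2

lemma Ffun_not_mem {i : Fin (m + 2)} (h : ¬ (i : ℕ) < (Aset g).card) : Ffun g i ∉ Aset g := by
  rw [Ffun_ge g h]
  have hmem := ((((Aset g)ᶜ).orderIsoOfFin (Aset_compl_card g))
    ⟨m + 1 - (i : ℕ), by have h1 := Aset_card_le g; have h2 := i.2; omega⟩).2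
  exact Finset.mem_compl.1 hmem

lemma Ffun_inj : Function.Injective (Ffun g) := by
  intro i j he
  by_cases hi : (i : ℕ) < (Aset g).card <;> by_cases hj : (j : ℕ) < (Aset g).card
  · rw [Ffun_lt g hi, Ffun_lt g hj] at he
    have := ((Aset g).orderIsoOfFin rfl).injective (Subtype.ext he)
    have := congrArg Fin.val this
    exact Fin.ext this
  · exact absurd (he ▸ Ffun_mem g hi) (Ffun_not_mem g hj)
  · exact absurd (he.symm ▸ Ffun_mem g hj) (Ffun_not_mem g hi)
  · rw [Ffun_ge g hi, Ffun_ge g hj] at he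
    have h2 := (((Aset g)ᶜ).orderIsoOfFin (Aset_compl_card g)).injective (Subtype.ext he)
    have h3 := congrArg Fin.val h2
    simp only at h3
    have h4 := i.2
    have h5 := j.2
    exact Fin.ext (by omega)

noncomputable def Psi : Equiv.Perm (Fin (m + 2)) :=
  Equiv.ofBijective (Ffun g) (Finite.injective_iff_bijective.1 (Ffun_inj g))

lemma Psi_apply (i : Fin (m + 2)) : Psi g i = Ffun g i := rfl

lemma orderIsoOfFin_le {s : Finset (Fin (m + 2))} {k : ℕ} (hs : s.card = k)
    {x y : Fin k} (h : x ≤ y) :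
    (s.orderIsoOfFin hs x : Fin (m + 2)) ≤ (s.orderIsoOfFin hs y : Fin (m + 2)) := by
  rcases eq_or_lt_of_le h with h | h
  · rw [h]
  · exact le_of_lt ((s.orderIsoOfFin hs).lt_iff_lt.2 h)

lemma Psi_top : Psi g ⟨(Aset g).card - 1, by have := Aset_card_le g; omega⟩ = lst := by
  have hk := Aset_card_pos g
  have hk2 := Aset_card_le g
  have hmem : (⟨(Aset g).card - 1, by omega⟩ : Fin (m + 2)).1 < (Aset g).card := by
    show (Aset g).card - 1 < (Aset g).card; omega
  rw [Psi_apply, Ffun_lt g hmem]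
  -- the top element of A is lst
  have hmax : ∀ a ∈ Aset g, a ≤ ((Aset g).orderIsoOfFin rfl
      ⟨(Aset g).card - 1, by omega⟩ : Fin (m + 2)) := by
    intro a ha
    have : a = ((Aset g).orderIsoOfFin rfl (((Aset g).orderIsoOfFin rfl).symm ⟨a, ha⟩) :
        Fin (m + 2)) := by rw [OrderIso.apply_symm_apply]
    rw [this]
    apply orderIsoOfFin_le
    rw [Fin.le_def]
    have := (((Aset g).orderIsoOfFin rfl).symm ⟨a, ha⟩).2
    show _ ≤ (Aset g).card - 1
    omega
  have h1 := hmax lst (lst_mem_Aset g)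
  have h2 : ((Aset g).orderIsoOfFin rfl ⟨(Aset g).card - 1, by omega⟩ : Fin (m + 2)) ≤ lst := by
    rw [Fin.le_def]
    exact le_lst _
  exact le_antisymm h2 h1

lemma Psi_lst : Psi g lst = 0 := by
  have hk := Aset_card_pos g
  have hk2 := Aset_card_le g
  have hge : ¬ ((lst : Fin (m + 2)) : ℕ) < (Aset g).card := by
    simp only [lst_val]; omega
  rw [Psi_apply, Ffun_ge g hge]
  have hidx : (⟨m + 1 - ((lst : Fin (m+2)) : ℕ), by simp only [lst_val]; omega⟩ :
      Fin (m + 2 - (Aset g).card)) = ⟨0, by omega⟩ := by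
    apply Fin.ext
    simp only [lst_val]
    omega
  have hmin : ∀ a ∈ (Aset g)ᶜ, (((Aset g)ᶜ).orderIsoOfFin (Aset_compl_card g)
      ⟨0, by omega⟩ : Fin (m + 2)) ≤ a := by
    intro a ha
    have : a = (((Aset g)ᶜ).orderIsoOfFin (Aset_compl_card g)
        ((((Aset g)ᶜ).orderIsoOfFin (Aset_compl_card g)).symm ⟨a, ha⟩) : Fin (m + 2)) := by
      rw [OrderIso.apply_symm_apply]
    rw [this]
    apply orderIsoOfFin_le
    rw [Fin.le_def]
    exact Nat.zero_le _
  have h0mem : (0 : Fin (m + 2)) ∈ (Aset g)ᶜ := Finset.mem_compl.2 (zero_not_mem_Aset g)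
  have h1 := hmin 0 h0mem
  have h2 : (0 : Fin (m + 2)) ≤ (((Aset g)ᶜ).orderIsoOfFin (Aset_compl_card g)
      ⟨0, by omega⟩ : Fin (m + 2)) := by
    rw [Fin.le_def]
    exact Nat.zero_le _
  rw [hidx]
  exact le_antisymm h1 h2

lemma Psi_zero_lt : ((0 : Fin (m + 2)) : ℕ) < (Aset g).card := by
  simp only [Fin.val_zero]
  exact Aset_card_pos g

lemma um0_Psi : UM0 (Psi g) := by
  have hk1 := Aset_card_pos g
  have hk2 := Aset_card_le g
  refine ⟨?_, Psi_lst g, ⟨(Aset g).card - 1, by omega⟩, ?_, ?_⟩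
  · -- Psi g 0 ≠ 0
    intro e
    apply zero_not_mem_Aset g
    rw [← e]
    exact Ffun_mem g (Psi_zero_lt g)
  · -- mono
    intro x hx y hy hxy
    rw [Set.mem_Iic, Fin.le_def] at hx hy
    have hx' : (x : ℕ) ≤ (Aset g).card - 1 := hx
    have hy' : (y : ℕ) ≤ (Aset g).card - 1 := hy
    have hxk : (x : ℕ) < (Aset g).card := by omega
    have hyk : (y : ℕ) < (Aset g).card := by omega
    rw [Psi_apply, Psi_apply, Ffun_lt g hxk, Ffun_lt g hyk]
    have := ((Aset g).orderIsoOfFin rfl).lt_iff_lt.2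
      (show (⟨(x:ℕ), hxk⟩ : Fin (Aset g).card) < ⟨(y:ℕ), hyk⟩ from hxy)
    exact this
  · -- anti
    intro x hx y hy hxy
    rw [Set.mem_Ici, Fin.le_def] at hx hy
    have hx' : (Aset g).card - 1 ≤ (x : ℕ) := hx
    have hy' : (Aset g).card - 1 ≤ (y : ℕ) := hy
    rcases (by omega : ((x : ℕ)) = (Aset g).card - 1 ∨ (Aset g).card ≤ (x : ℕ)) with hxp | hxk
    · -- x is the peak
      have hxeq : x = ⟨(Aset g).card - 1, by omega⟩ := Fin.ext hxp
      rw [hxeq, Psi_top g]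
      have hne : Psi g y ≠ lst := by
        intro e
        have := (Psi g).injective (e.trans (Psi_top g).symm)
        rw [this, hxeq] at hxy
        exact lt_irrefl _ hxy
      have := le_lst (Psi g y)
      rw [Fin.lt_def]
      have : ((Psi g y : ℕ)) ≠ m + 1 := fun e => hne (Fin.ext (by simp only [lst_val]; omega))
      simp only [lst_val]
      have := le_lst (Psi g y)
      omega
    · -- both in the complement region
      have hyk : (Aset g).card ≤ (y : ℕ) := by
        rw [Fin.lt_def] at hxy
        omega
      rw [Psi_apply, Psi_apply, Ffun_ge g (by omega), Ffun_ge g (by omega)]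
      have hlt : (⟨m + 1 - (y : ℕ), by have := y.2; omega⟩ : Fin (m + 2 - (Aset g).card)) <
          ⟨m + 1 - (x : ℕ), by have := x.2; omega⟩ := by
        show m + 1 - (y : ℕ) < m + 1 - (x : ℕ)
        rw [Fin.lt_def] at hxy
        have := y.2
        omega
      exact (((Aset g)ᶜ).orderIsoOfFin (Aset_compl_card g)).lt_iff_lt.2 hlt

lemma Psi_symm_lst : (Psi g).symm lst = ⟨(Aset g).card - 1, by have := Aset_card_le g; omega⟩ := by
  rw [Equiv.symm_apply_eq, Psi_top g]

lemma Phi_Psi : Phi (Psi g) = g := by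
  have hk1 := Aset_card_pos g
  have hk2 := Aset_card_le g
  funext v
  rw [Phi, Psi_symm_lst g]
  by_cases hg : g v = true
  · -- vv v is in the increasing part
    have hmem : vv v ∈ Aset g := (mem_vv_Aset g).2 hg
    set x := ((Aset g).orderIsoOfFin rfl).symm ⟨vv v, hmem⟩ with hxdef
    have hx2 : (x : ℕ) < (Aset g).card := x.2
    have hpos : Psi g ⟨(x : ℕ), by omega⟩ = vv v := by
      rw [Psi_apply, Ffun_lt g (show ((⟨(x : ℕ), by omega⟩ : Fin (m+2)) : ℕ) < _ from hx2)]
      have : (⟨((⟨(x : ℕ), by omega⟩ : Fin (m+2)) : ℕ), hx2⟩ : Fin (Aset g).card) = x :=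
        Fin.ext rfl
      rw [this, hxdef, OrderIso.apply_symm_apply]
    have hsymm : (Psi g).symm (vv v) = ⟨(x : ℕ), by omega⟩ := by
      rw [Equiv.symm_apply_eq, hpos]
    rw [hsymm, hg]
    have hxne : (x : ℕ) ≠ (Aset g).card - 1 := by
      intro e
      have : (⟨(x : ℕ), by omega⟩ : Fin (m + 2)) = ⟨(Aset g).card - 1, by omega⟩ :=
        Fin.ext e
      rw [this] at hpos
      rw [Psi_top g] at hpos
      have := congrArg Fin.val hpos
      simp only [lst_val, vv_val] at this
      have := v.2
      omega
    simp only [decide_eq_true_iff]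
    rw [Fin.lt_def]
    show (x : ℕ) < (Aset g).card - 1
    omega
  · -- vv v is in the decreasing part
    have hmem : vv v ∈ (Aset g)ᶜ := Finset.mem_compl.2 (fun h => hg ((mem_vv_Aset g).1 h))
    set y := (((Aset g)ᶜ).orderIsoOfFin (Aset_compl_card g)).symm ⟨vv v, hmem⟩ with hydef
    have hy2 : (y : ℕ) < m + 2 - (Aset g).card := y.2
    have hik : (Aset g).card ≤ m + 1 - (y : ℕ) := by omega
    have hpos : Psi g ⟨m + 1 - (y : ℕ), by omega⟩ = vv v := by
      rw [Psi_apply, Ffun_ge g (show ¬ ((⟨m + 1 - (y : ℕ), by omega⟩ : Fin (m+2)) : ℕ) < _ by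
        show ¬ m + 1 - (y : ℕ) < _; omega)]
      have he : (⟨m + 1 - ((⟨m + 1 - (y : ℕ), by omega⟩ : Fin (m+2)) : ℕ), by
          show m + 1 - (m + 1 - (y : ℕ)) < m + 2 - (Aset g).card
          omega⟩ : Fin (m + 2 - (Aset g).card)) = y := by
        apply Fin.ext
        show m + 1 - (m + 1 - (y : ℕ)) = (y : ℕ)
        omega
      rw [he, hydef, OrderIso.apply_symm_apply]
    have hsymm : (Psi g).symm (vv v) = ⟨m + 1 - (y : ℕ), by omega⟩ := by
      rw [Equiv.symm_apply_eq, hpos]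
    rw [hsymm]
    simp only [hg]
    simp only [decide_eq_false_iff_not]
    rw [Fin.lt_def]
    show ¬ m + 1 - (y : ℕ) < (Aset g).card - 1
    omega

end Psi

lemma card_um0 : Nat.card {τ : Equiv.Perm (Fin (m + 2)) // UM0 τ} = 2 ^ m := by
  have hbij : Function.Bijective (fun τ : {τ : Equiv.Perm (Fin (m + 2)) // UM0 τ} => Phi τ.1) := by
    constructor
    · rintro ⟨τ, hτ⟩ ⟨τ', hτ'⟩ he
      exact Subtype.ext (um0_ext hτ hτ' he)
    · intro g
      exact ⟨⟨Psi g, um0_Psi g⟩, Phi_Psi g⟩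
  rw [Nat.card_eq_of_bijective _ hbij]
  simp [Nat.card_eq_fintype_card]

lemma pen_iff {τ : Equiv.Perm (Fin (m + 2))} (h : UM0 τ) :
    τ pen = lst ↔ Phi τ = fun _ => true := by
  constructor
  · intro hp
    have hsymm : τ.symm lst = pen := by rw [Equiv.symm_apply_eq, hp]
    funext v
    rw [Phi, hsymm]
    simp only [decide_eq_true_iff]
    have h1 : τ.symm (vv v) ≠ pen := by
      intro e
      have : τ pen = vv v := by rw [← e, τ.apply_symm_apply]
      rw [hp] at this
      have := congrArg Fin.val this
      simp only [lst_val, vv_val] at this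
      have := v.2
      omega
    have h2 : τ.symm (vv v) ≠ lst := by
      intro e
      have : τ lst = vv v := by rw [← e, τ.apply_symm_apply]
      rw [h.2.1] at this
      have := congrArg Fin.val this
      simp only [Fin.val_zero, vv_val] at this
      omega
    have h1v : ((τ.symm (vv v) : ℕ)) ≠ m := fun e => h1 (Fin.ext (by simp only [pen_val]; omega))
    have h2v : ((τ.symm (vv v) : ℕ)) ≠ m + 1 :=
      fun e => h2 (Fin.ext (by simp only [lst_val]; omega))
    have := le_lst (τ.symm (vv v))
    rw [Fin.lt_def]
    simp only [pen_val]
    omega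
  · intro hΦ
    classical
    have hall : ∀ v : Fin m, τ.symm (vv v) < τ.symm lst := by
      intro v
      have := congrFun hΦ v
      rw [Phi] at this
      exact of_decide_eq_true this
    have hsub : Finset.image (fun v => τ.symm (vv v)) Finset.univ ⊆
        Finset.Iio (τ.symm lst) := by
      intro a ha
      obtain ⟨v, -, rfl⟩ := Finset.mem_image.1 ha
      exact Finset.mem_Iio.2 (hall v)
    have hinj : Function.Injective (fun v : Fin m => τ.symm (vv v)) := by
      intro a b he
      have := τ.symm.injective he
      have := congrArg Fin.val this
      simp only [vv_val] at this
      exact Fin.ext (by omega)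
    have hcard := Finset.card_le_card hsub
    rw [Finset.card_image_of_injective _ hinj, Finset.card_univ, Fintype.card_fin,
      Fin.card_Iio] at hcard
    have hne := peak_ne_lst h
    have hnev : ((τ.symm lst : ℕ)) ≠ m + 1 :=
      fun e => hne (Fin.ext (by simp only [lst_val]; omega))
    have hle := le_lst (τ.symm lst)
    have hpeak : τ.symm lst = pen := Fin.ext (by simp only [pen_val]; omega)
    rw [← hpeak, τ.apply_symm_apply]

lemma card_um0_ne : Nat.card {τ : Equiv.Perm (Fin (m + 2)) // UM0 τ ∧ τ pen ≠ lst} =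
    2 ^ m - 1 := by
  classical
  have hbij : Function.Bijective
      (fun τ : {τ : Equiv.Perm (Fin (m + 2)) // UM0 τ ∧ τ pen ≠ lst} =>
        (⟨Phi τ.1, fun e => τ.2.2 ((pen_iff τ.2.1).2 e)⟩ :
          {g : Fin m → Bool // g ≠ fun _ => true})) := by
    constructor
    · rintro ⟨τ, hτ⟩ ⟨τ', hτ'⟩ he
      exact Subtype.ext (um0_ext hτ.1 hτ'.1 (congrArg Subtype.val he))
    · rintro ⟨g, hg⟩
      refine ⟨⟨Psi g, um0_Psi g, ?_⟩, ?_⟩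
      · intro e
        exact hg ((Phi_Psi g).symm.trans ((pen_iff (um0_Psi g)).1 e))
      · exact Subtype.ext (Phi_Psi g)
  rw [Nat.card_eq_of_bijective _ hbij]
  rw [Nat.card_eq_fintype_card, Fintype.card_subtype_compl]
  have h1 : Fintype.card {g : Fin m → Bool // g = fun _ => true} = 1 :=
    Fintype.card_subtype_eq _
  rw [h1]
  simp


lemma card_or {α : Type*} [Fintype α] (p q : α → Prop) (h : ∀ x, ¬(p x ∧ q x)) :
    Nat.card {x // p x ∨ q x} = Nat.card {x // p x} + Nat.card {x // q x} := by
  classical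
  simp only [Nat.card_eq_fintype_card, Fintype.card_subtype]
  rw [Finset.filter_or, Finset.card_union_of_disjoint]
  rw [Finset.disjoint_filter]
  intro x _ hp hq
  exact h x ⟨hp, hq⟩

lemma um0_not_B {σ : Equiv.Perm (Fin (m + 2))} (h : UM0 σ) :
    ¬(UM0 (σ * Equiv.swap pen lst) ∧ σ lst ≠ lst) := by
  rintro ⟨hB, -⟩
  have h1 : σ lst = 0 := h.2.1
  have h2 : σ pen = 0 := by
    have := hB.2.1
    rwa [Equiv.Perm.mul_apply, Equiv.swap_apply_right] at this
  have : pen = (lst : Fin (m + 2)) := σ.injective (h2.trans h1.symm)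
  have := congrArg Fin.val this
  simp only [pen_val, lst_val] at this
  omega

lemma card_B : Nat.card {σ : Equiv.Perm (Fin (m + 2)) //
    UM0 (σ * Equiv.swap pen lst) ∧ σ lst ≠ lst} = 2 ^ m - 1 := by
  have he : {σ : Equiv.Perm (Fin (m + 2)) // UM0 (σ * Equiv.swap pen lst) ∧ σ lst ≠ lst} ≃
      {τ : Equiv.Perm (Fin (m + 2)) // UM0 τ ∧ τ pen ≠ lst} := by
    apply Equiv.subtypeEquiv (Equiv.mulRight (Equiv.swap pen lst))
    intro σ
    have hps : (σ * Equiv.swap pen lst : Equiv.Perm (Fin (m + 2))) pen = σ lst := by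
      rw [Equiv.Perm.mul_apply, Equiv.swap_apply_left]
    simp only [Equiv.coe_mulRight]
    rw [hps]
  rw [Nat.card_congr he, card_um0_ne]

lemma card_good : Nat.card {σ : Equiv.Perm (Fin (m + 2)) // Good σ} = 2 ^ (m + 1) - 1 := by
  have h1 : Nat.card {σ : Equiv.Perm (Fin (m + 2)) // Good σ} =
      Nat.card {σ : Equiv.Perm (Fin (m + 2)) // UM0 σ} +
      Nat.card {σ : Equiv.Perm (Fin (m + 2)) //
        UM0 (σ * Equiv.swap pen lst) ∧ σ lst ≠ lst} :=
    card_or _ _ (fun σ hc => um0_not_B hc.1 hc.2)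
  rw [h1, card_um0, card_B]
  have : 1 ≤ 2 ^ m := Nat.one_le_two_pow
  rw [pow_succ]
  omega

end CAT

theorem card_connected_avoidsT1T2 (n : ℕ) (hn : 2 ≤ n) :
    Nat.card {σ : Equiv.Perm (Fin n) // AvoidsT1T2 σ ∧ Connected σ} = 2 ^ (n - 1) - 1 := by
  obtain ⟨m, rfl⟩ : ∃ m, n = m + 2 := ⟨n - 2, by omega⟩
  have hiff : ∀ σ : Equiv.Perm (Fin (m + 2)), (AvoidsT1T2 σ ∧ Connected σ) ↔ CAT.Good σ :=
    fun σ => ⟨fun ⟨ha, hc⟩ => CAT.good_of (H_of_avoids ha) hc,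
      fun hg => ⟨avoids_of_H (CAT.hprop_of_good hg), CAT.conn_of_good hg⟩⟩
  rw [Nat.card_congr (Equiv.subtypeEquivRight hiff), CAT.card_good]
  norm_num
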